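/- Consider the multiplication on tangent vectors of ℝⁿ⁺¹ (coordinates x₀,…,xₙ, xᵢ pairwise distinct) defined by ∂ᵢ * ∂ⱼ = −((n+1)/2)(∂ᵢ − ∂ⱼ)/(xᵢ − xⱼ) for i ≠ j and ∂ᵢ * ∂ᵢ = −Σ_{j≠i} ∂ᵢ * ∂ⱼ. Then this multiplication is commutative and associative, and the vector field Σᵢ ∂ᵢ annihilates every vector: (Σᵢ ∂ᵢ) * v = 0 for all tangent vectors v. -/

import Mathlib

open scoped BigOperators

lemma sum_antisymm_aux {N : ℕ} (F : Fin N → Fin N → ℝ) (h : ∀ j k, F j k + F k j = 0) :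
    ∑ j, ∑ k, F j k = 0 := by
  have h2 : (∑ j, ∑ k, F j k) + (∑ j, ∑ k, F j k) = 0 := by
    nth_rewrite 2 [Finset.sum_comm]
    rw [← Finset.sum_add_distrib]
    refine Finset.sum_eq_zero fun a _ => ?_
    rw [← Finset.sum_add_distrib]
    exact Finset.sum_eq_zero fun b _ => h a b
  linarith

/-- The multiplication on tangent vectors of `ℝⁿ⁺¹` (at a point `x`
with pairwise distinct coordinates) defined by
`∂ᵢ * ∂ⱼ = −((n+1)/2)(∂ᵢ − ∂ⱼ)/(xᵢ − xⱼ)` for `i ≠ j` and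
`∂ᵢ * ∂ᵢ = −Σ_{j≠i} ∂ᵢ * ∂ⱼ` is commutative and associative, and the vector field
`Σᵢ ∂ᵢ` annihilates every vector. -/
theorem stmt_15 {n : ℕ} (x : Fin (n + 1) → ℝ)
    (hx : ∀ i j : Fin (n + 1), i ≠ j → x i ≠ x j)
    (base : Fin (n + 1) → Fin (n + 1) → (Fin (n + 1) → ℝ))
    (hbase : ∀ i j, base i j =
      if i = j then 0
      else (-(((n : ℝ) + 1) / 2) / (x i - x j)) •
        ((Pi.single i 1 : Fin (n + 1) → ℝ) - (Pi.single j 1 : Fin (n + 1) → ℝ)))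
    (c : Fin (n + 1) → Fin (n + 1) → (Fin (n + 1) → ℝ))
    (hc : ∀ i j, c i j = if i = j then -(∑ k, base i k) else base i j)
    (m : (Fin (n + 1) → ℝ) → (Fin (n + 1) → ℝ) → (Fin (n + 1) → ℝ))
    (hm : ∀ u v, m u v = ∑ i, ∑ j, (u i * v j) • c i j) :
    (∀ u v, m u v = m v u) ∧
    (∀ u v w, m (m u v) w = m u (m v w)) ∧
    (∀ v, m (fun _ => 1) v = 0) := by
  classical
  set g : Fin (n+1) → Fin (n+1) → ℝ :=
    fun i j => if i = j then 0 else (-(((n : ℝ) + 1) / 2) / (x i - x j)) with hg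
  have hxne : ∀ i j : Fin (n+1), i ≠ j → x i - x j ≠ 0 :=
    fun i j h => sub_ne_zero.mpr (hx i j h)
  have gskew : ∀ i j, g j i = - g i j := by
    intro i j
    by_cases h : i = j
    · subst h; simp [hg]
    · have h' : j ≠ i := fun hh => h hh.symm
      simp only [hg, if_neg h, if_neg h']
      field_simp
      rw [← neg_sub (x i) (x j), div_neg, neg_neg]
  have hbasep : ∀ i j p, base i j p
      = g i j * ((if p = i then (1:ℝ) else 0) - (if p = j then 1 else 0)) := by
    intro i j p
    rw [hbase]
    by_cases h : i = j
    · simp [h, hg]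
    · simp only [if_neg h, hg, Pi.smul_apply, Pi.sub_apply, Pi.single_apply, smul_eq_mul]
  have hcp : ∀ i j p, c i j p = base i j p - (if j = i then (∑ k, base i k p) else 0) := by
    intro i j p
    by_cases h : i = j
    · subst h
      have hb : base i i p = 0 := by rw [hbasep]; simp
      simp [hc, Finset.sum_apply, hb]
    · simp [hc, h, Ne.symm h]
  have mform : ∀ u v p, m u v p = ∑ j, -(g p j * ((u p - u j) * (v p - v j))) := by
    intro u v p
    rw [hm]
    simp only [Finset.sum_apply, Pi.smul_apply, smul_eq_mul, hcp, hbasep, mul_sub, mul_ite,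
      mul_one, mul_zero, Finset.sum_sub_distrib, Finset.sum_ite_irrel, Finset.sum_const_zero,
      Finset.sum_ite_eq, Finset.sum_ite_eq', Finset.mem_univ, if_true]
    rw [Finset.mul_sum, ← Finset.sum_sub_distrib, ← Finset.sum_sub_distrib,
      ← Finset.sum_sub_distrib]
    refine Finset.sum_congr rfl fun j _ => ?_
    rw [gskew p j]
    ring
  have comm : ∀ u v, m u v = m v u := by
    intro u v
    funext p
    rw [mform, mform]
    exact Finset.sum_congr rfl fun j _ => by ring
  have unit : ∀ v, m (fun _ => 1) v = 0 := by
    intro v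
    funext p
    rw [mform]
    simp
  have assoc : ∀ u v w, m (m u v) w = m u (m v w) := by
    intro u v w
    funext p
    rw [show m (m u v) w p = ∑ j, -(g p j * ((m u v p - m u v j) * (w p - w j))) from
      mform (m u v) w p]
    rw [show m u (m v w) p = ∑ j, -(g p j * ((u p - u j) * (m v w p - m v w j))) from
      mform u (m v w) p]
    rw [← sub_eq_zero]
    have inn1 : ∀ j, m u v p - m u v j
        = ∑ k, (-(g p k * ((u p - u k) * (v p - v k)))
            + g j k * ((u j - u k) * (v j - v k))) := by
      intro j
      rw [mform u v p, mform u v j, ← Finset.sum_sub_distrib]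
      exact Finset.sum_congr rfl fun k _ => by ring
    have inn2 : ∀ j, m v w p - m v w j
        = ∑ k, (-(g p k * ((v p - v k) * (w p - w k)))
            + g j k * ((v j - v k) * (w j - w k))) := by
      intro j
      rw [mform v w p, mform v w j, ← Finset.sum_sub_distrib]
      exact Finset.sum_congr rfl fun k _ => by ring
    have lhs_eq : (∑ j, -(g p j * ((m u v p - m u v j) * (w p - w j))))
        - (∑ j, -(g p j * ((u p - u j) * (m v w p - m v w j))))
        = ∑ j, ∑ k,
          (-(g p j * ((-(g p k * ((u p - u k) * (v p - v k)))
              + g j k * ((u j - u k) * (v j - v k))) * (w p - w j)))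
          + g p j * ((u p - u j) * (-(g p k * ((v p - v k) * (w p - w k)))
              + g j k * ((v j - v k) * (w j - w k))))) := by
      rw [← Finset.sum_sub_distrib]
      refine Finset.sum_congr rfl fun j _ => ?_
      rw [inn1 j, inn2 j, Finset.sum_mul, Finset.mul_sum, Finset.mul_sum, Finset.mul_sum,
        neg_sub_neg, ← Finset.sum_sub_distrib]
      refine Finset.sum_congr rfl fun k _ => by ring
    rw [lhs_eq]
    refine sum_antisymm_aux _ fun j k => ?_
    by_cases hpj : p = j
    · subst hpj
      have h0 : g p p = 0 := by simp [hg]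
      rw [h0]
      ring
    · by_cases hpk : p = k
      · subst hpk
        have h0 : g p p = 0 := by simp [hg]
        rw [h0]
        ring
      · by_cases hjk : j = k
        · subst hjk
          have h0 : g j j = 0 := by simp [hg]
          rw [h0]
          ring
        · have hjp : j ≠ p := fun h => hpj h.symm
          have hkp : k ≠ p := fun h => hpk h.symm
          have hkj : k ≠ j := fun h => hjk h.symm
          simp only [hg, if_neg hpj, if_neg hpk, if_neg hjk, if_neg hkj]
          have d1 := hxne p j hpj
          have d2 := hxne p k hpk
          have d3 := hxne j k hjk
          have d4 := hxne k j hkj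
          field_simp
          ring
  exact ⟨comm, assoc, unit⟩
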